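/- (Uniqueness of the solution under a full-rank condition.) Let p ∈ ℝ^L and set η = Φ̃*(p); assume ‖η‖_∞ ≤ 1 and that the saturation set S = { t ∈ 𝕋 : |η(t)| = 1 } is finite, S = {τ_1, …, τ_P}. Assume the L × P matrix Ψ with entries Ψ[ℓ, p] = φ_ℓ(τ_p) has trivial kernel (the map ℝ^P → ℝ^L, β ↦ Ψβ is injective). Then for any y₀ ∈ ℝ^L, if m₁, m₂ ∈ M(𝕋) both satisfy Φ̃(m_i) = y₀ and ∫ η dm_i = ‖m_i‖_TV (i = 1, 2), then m₁ = m₂. In particular the primal problem min { ‖m‖_TV : Φ̃(m) = y₀ } for which η is a dual certificate has at most one solution. -/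

import Mathlib

open MeasureTheory
open scoped Classical

/-- Total variation norm of a finite signed measure: `‖m‖_TV = m⁺(univ) + m⁻(univ)`. -/
noncomputable def tvNorm {X : Type*} [MeasurableSpace X] (m : SignedMeasure X) : ℝ :=
  (m.totalVariation Set.univ).toReal

/-- Pairing of a function with a signed measure: `∫ η dm = ∫ η dm⁺ − ∫ η dm⁻`. -/
noncomputable def pairing {X : Type*} [MeasurableSpace X]
    (η : X → ℝ) (m : SignedMeasure X) : ℝ :=
  (∫ x, η x ∂m.toJordanDecomposition.posPart) - ∫ x, η x ∂m.toJordanDecomposition.negPart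

/-- Supremum norm `‖η‖_∞ = sup_t |η t|`. -/
noncomputable def supNorm {X : Type*} (η : X → ℝ) : ℝ :=
  sSup (Set.range fun t => |η t|)

lemma sm_apply_jordan {X : Type*} [MeasurableSpace X] (m : SignedMeasure X) {s : Set X}
    (hs : MeasurableSet s) :
    m s = (m.toJordanDecomposition.posPart s).toReal -
      (m.toJordanDecomposition.negPart s).toReal := by
  conv_lhs => rw [← m.toSignedMeasure_toJordanDecomposition]
  rw [JordanDecomposition.toSignedMeasure, Measure.toSignedMeasure_sub_apply hs]
  rfl

lemma cont_integrable {X : Type*} [MeasurableSpace X] [TopologicalSpace X] [CompactSpace X]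
    [OpensMeasurableSpace X] (f : X → ℝ) (hf : Continuous f) (μ : Measure X)
    [IsFiniteMeasure μ] : Integrable f μ :=
  hf.integrable_of_hasCompactSupport (isClosed_tsupport f).isCompact

lemma concentrated {T : ℝ} [Fact (0 < T)] {η : AddCircle T → ℝ} (hηc : Continuous η)
    (habs : ∀ t, |η t| ≤ 1)
    (m : SignedMeasure (AddCircle T)) (hc : pairing η m = tvNorm m) :
    m.toJordanDecomposition.posPart {t | η t ≠ 1} = 0 ∧
    m.toJordanDecomposition.negPart {t | η t ≠ -1} = 0 := by
  set μp := m.toJordanDecomposition.posPart with hμp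
  set μn := m.toJordanDecomposition.negPart with hμn
  have hip : Integrable η μp := cont_integrable η hηc μp
  have hin : Integrable η μn := cont_integrable η hηc μn
  have htv : tvNorm m = (μp Set.univ).toReal + (μn Set.univ).toReal := by
    rw [tvNorm, SignedMeasure.totalVariation, Measure.add_apply,
      ENNReal.toReal_add (measure_ne_top _ _) (measure_ne_top _ _)]
  have hpair : pairing η m = (∫ t, η t ∂μp) - ∫ t, η t ∂μn := rfl
  have h1 : (∫ t, (1 - η t) ∂μp) + (∫ t, (1 + η t) ∂μn) = 0 := by
    rw [integral_sub (integrable_const 1) hip, integral_add (integrable_const 1) hin,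
      integral_const, integral_const]
    rw [hpair, htv] at hc
    simp only [smul_eq_mul, mul_one, measureReal_def]
    linarith
  have hnn1 : 0 ≤ fun t => 1 - η t := fun t => by
    have := (abs_le.mp (habs t)).2; simp; linarith
  have hnn2 : 0 ≤ fun t => 1 + η t := fun t => by
    have := (abs_le.mp (habs t)).1; simp; linarith
  have g1 : 0 ≤ ∫ t, (1 - η t) ∂μp := integral_nonneg hnn1
  have g2 : 0 ≤ ∫ t, (1 + η t) ∂μn := integral_nonneg hnn2
  have hz1 : (∫ t, (1 - η t) ∂μp) = 0 := by linarith
  have hz2 : (∫ t, (1 + η t) ∂μn) = 0 := by linarith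
  constructor
  · have hae := (integral_eq_zero_iff_of_nonneg hnn1
      ((integrable_const 1).sub hip)).mp hz1
    have hμ : ∀ᵐ t ∂μp, η t = 1 := by
      filter_upwards [hae] with t ht
      have h2 : 1 - η t = 0 := ht
      linarith
    simpa [ae_iff] using hμ
  · have hae := (integral_eq_zero_iff_of_nonneg hnn2
      ((integrable_const 1).add hin)).mp hz2
    have hμ : ∀ᵐ t ∂μn, η t = -1 := by
      filter_upwards [hae] with t ht
      have h2 : 1 + η t = 0 := ht
      linarith
    simpa [ae_iff] using hμ

lemma integral_conc {X : Type*} [MeasurableSpace X] [MeasurableSingletonClass X] {P : ℕ}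
    (τ : Fin P → X) (hτinj : Function.Injective τ) (μ : Measure X) [IsFiniteMeasure μ]
    (hnull : μ (Set.range τ)ᶜ = 0) (f : X → ℝ) (hf : Integrable f μ) :
    ∫ x, f x ∂μ = ∑ q, (μ {τ q}).toReal * f (τ q) := by
  have hSmeas : MeasurableSet (Set.range τ) := (Set.finite_range τ).measurableSet
  rw [← integral_add_compl hSmeas hf]
  have h0 : ∫ x in (Set.range τ)ᶜ, f x ∂μ = 0 := by
    rw [Measure.restrict_eq_zero.mpr hnull, integral_zero_measure]
  rw [h0, add_zero]
  have hrange : Set.range τ = ↑(Finset.univ.image τ) := by simp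
  rw [hrange, integral_finset _ hf.integrableOn,
    Finset.sum_image (fun a _ b _ h => hτinj h)]
  simp [smul_eq_mul, measureReal_def]

lemma apply_conc {X : Type*} [MeasurableSpace X] [MeasurableSingletonClass X] {P : ℕ}
    (τ : Fin P → X) (hτinj : Function.Injective τ) (μ : Measure X)
    (hnull : μ (Set.range τ)ᶜ = 0) {s : Set X} (hs : MeasurableSet s) :
    μ s = ∑ q ∈ Finset.univ.filter (fun q => τ q ∈ s), μ {τ q} := by
  have hSmeas : MeasurableSet (Set.range τ) := (Set.finite_range τ).measurableSet
  have h1 : μ s = μ (s ∩ Set.range τ) := by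
    rw [← measure_inter_add_diff s hSmeas,
      measure_mono_null (fun x hx => hx.2 : s \ Set.range τ ⊆ (Set.range τ)ᶜ) hnull, add_zero]
  have h2 : s ∩ Set.range τ =
      ⋃ q ∈ Finset.univ.filter (fun q => τ q ∈ s), {τ q} := by
    ext x
    simp only [Set.mem_inter_iff, Set.mem_range, Set.mem_iUnion, Finset.mem_filter,
      Finset.mem_univ, true_and, Set.mem_singleton_iff]
    constructor
    · rintro ⟨hxs, q, rfl⟩; exact ⟨q, hxs, rfl⟩
    · rintro ⟨q, hq, rfl⟩; exact ⟨hq, q, rfl⟩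
  rw [h1, h2, measure_biUnion_finset ?_ (fun q _ => measurableSet_singleton _)]
  intro a _ b _ hab
  simp only [Function.onFun, Set.disjoint_singleton]
  exact hτinj.ne hab

/-- **uniqueness under a full-rank condition.** Let `η = Φ̃*(p)` with
`‖η‖_∞ ≤ 1`, whose saturation set is finite, enumerated by an injective
`τ : Fin P → 𝕋` with range `{ t : |η t| = 1 }`.  If the `L × P` matrix
`Ψ[ℓ, q] = φ_ℓ(τ_q)` has trivial kernel, then any two measures `m₁, m₂` with
`Φ̃(m_i) = y₀` and `∫ η dm_i = ‖m_i‖_TV` are equal. -/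
theorem uniqueness_of_primal_solution_of_full_rank (T : ℝ) [Fact (0 < T)]
    (L : ℕ) (hL : 1 ≤ L) (φ : Fin L → AddCircle T → ℝ) (hφ : ∀ ℓ, Continuous (φ ℓ))
    (p : Fin L → ℝ) (η : AddCircle T → ℝ)
    (hη : η = fun t => ∑ ℓ, p ℓ * φ ℓ t)
    (hηnorm : supNorm η ≤ 1)
    (P : ℕ) (τ : Fin P → AddCircle T) (hτinj : Function.Injective τ)
    (hτrange : Set.range τ = {t : AddCircle T | |η t| = 1})
    (hfullrank : Function.Injective fun β : Fin P → ℝ =>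
      (Matrix.of fun ℓ q => φ ℓ (τ q)).mulVec β)
    (y₀ : Fin L → ℝ) (m₁ m₂ : SignedMeasure (AddCircle T))
    (hm₁ : ∀ ℓ, pairing (φ ℓ) m₁ = y₀ ℓ) (hm₂ : ∀ ℓ, pairing (φ ℓ) m₂ = y₀ ℓ)
    (hc₁ : pairing η m₁ = tvNorm m₁) (hc₂ : pairing η m₂ = tvNorm m₂) :
    m₁ = m₂ := by
  classical
  have hηc : Continuous η := by
    rw [hη]; exact continuous_finset_sum _ fun ℓ _ => continuous_const.mul (hφ ℓ)
  have habs : ∀ t, |η t| ≤ 1 := fun t =>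
    le_trans (le_csSup (isCompact_range hηc.abs).bddAbove ⟨t, rfl⟩) hηnorm
  have hnull : ∀ m : SignedMeasure (AddCircle T), pairing η m = tvNorm m →
      m.toJordanDecomposition.posPart (Set.range τ)ᶜ = 0 ∧
      m.toJordanDecomposition.negPart (Set.range τ)ᶜ = 0 := by
    intro m hc
    obtain ⟨h1, h2⟩ := concentrated hηc habs m hc
    constructor
    · refine measure_mono_null ?_ h1
      intro t ht heq
      exact ht (by rw [hτrange]; simp [heq])
    · refine measure_mono_null ?_ h2
      intro t ht heq
      exact ht (by rw [hτrange]; simp [heq])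
  obtain ⟨h₁p, h₁n⟩ := hnull m₁ hc₁
  obtain ⟨h₂p, h₂n⟩ := hnull m₂ hc₂
  have hmv : ∀ (m : SignedMeasure (AddCircle T)),
      m.toJordanDecomposition.posPart (Set.range τ)ᶜ = 0 →
      m.toJordanDecomposition.negPart (Set.range τ)ᶜ = 0 →
      ∀ ℓ, pairing (φ ℓ) m = ∑ q, φ ℓ (τ q) * m {τ q} := by
    intro m hp hn ℓ
    rw [pairing, integral_conc τ hτinj _ hp _ (cont_integrable _ (hφ ℓ) _),
      integral_conc τ hτinj _ hn _ (cont_integrable _ (hφ ℓ) _),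
      ← Finset.sum_sub_distrib]
    refine Finset.sum_congr rfl fun q _ => ?_
    rw [sm_apply_jordan m (measurableSet_singleton _)]
    ring
  have hΨ : (Matrix.of fun ℓ q => φ ℓ (τ q)).mulVec (fun q => m₁ {τ q}) =
      (Matrix.of fun ℓ q => φ ℓ (τ q)).mulVec (fun q => m₂ {τ q}) := by
    funext ℓ
    have e1 : ∑ q, φ ℓ (τ q) * m₁ {τ q} = y₀ ℓ :=
      (hmv m₁ h₁p h₁n ℓ).symm.trans (hm₁ ℓ)
    have e2 : ∑ q, φ ℓ (τ q) * m₂ {τ q} = y₀ ℓ :=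
      (hmv m₂ h₂p h₂n ℓ).symm.trans (hm₂ ℓ)
    simp only [Matrix.mulVec, dotProduct, Matrix.of_apply]
    rw [e1, e2]
  have hβ : (fun q => m₁ {τ q}) = fun q => m₂ {τ q} := hfullrank hΨ
  ext s hs
  rw [sm_apply_jordan m₁ hs, sm_apply_jordan m₂ hs,
    apply_conc τ hτinj _ h₁p hs, apply_conc τ hτinj _ h₁n hs,
    apply_conc τ hτinj _ h₂p hs, apply_conc τ hτinj _ h₂n hs,
    ENNReal.toReal_sum (fun q _ => measure_ne_top _ _),
    ENNReal.toReal_sum (fun q _ => measure_ne_top _ _),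
    ENNReal.toReal_sum (fun q _ => measure_ne_top _ _),
    ENNReal.toReal_sum (fun q _ => measure_ne_top _ _),
    ← Finset.sum_sub_distrib, ← Finset.sum_sub_distrib]
  refine Finset.sum_congr rfl fun q _ => ?_
  rw [← sm_apply_jordan m₁ (measurableSet_singleton _),
    ← sm_apply_jordan m₂ (measurableSet_singleton _)]
  exact congrFun hβ q
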